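/- For every natural number m ≥ 1, one has ∑_{j=1}^m |γ_{m,j}| · j < √(π m), where γ_{m,j} := (-1)^{j-1} · (2/j) · C(2m, m+j) / C(2m, m). -/

import Mathlib

noncomputable def gam (m j : ℕ) : ℝ :=
  (-1) ^ (j - 1) * (2 / j) * (Nat.choose (2 * m) (m + j)) / (Nat.choose (2 * m) m)

lemma sum_choose_upper (m : ℕ) :
    2 * (∑ j ∈ Finset.Icc 1 m, Nat.choose (2 * m) (m + j)) + Nat.choose (2 * m) m
      = 4 ^ m := by
  have h1 : ∑ i ∈ Finset.range (2 * m + 1), Nat.choose (2 * m) i = 2 ^ (2 * m) :=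
    Nat.sum_range_choose (2 * m)
  have hsplit : Finset.range (2 * m + 1) =
      Finset.range (m + (m + 1)) := by congr 1; omega
  rw [hsplit, Finset.sum_range_add, Finset.sum_range_succ'] at h1
  have hIcc : ∑ j ∈ Finset.Icc 1 m, Nat.choose (2 * m) (m + j)
      = ∑ i ∈ Finset.range m, Nat.choose (2 * m) (m + (i + 1)) := by
    rw [show Finset.Icc 1 m = Finset.Ico 1 (m + 1) by rfl, Finset.sum_Ico_eq_sum_range]
    apply Finset.sum_congr (by congr 1)
    intro i _
    congr 1
    omega
  have hsym : ∑ i ∈ Finset.range m, Nat.choose (2 * m) (m + (i + 1))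
      = ∑ i ∈ Finset.range m, Nat.choose (2 * m) i := by
    rw [← Finset.sum_range_reflect]
    apply Finset.sum_congr rfl
    intro i hi
    have him : i < m := Finset.mem_range.mp hi
    have h2 : m + (m - 1 - i + 1) = 2 * m - i := by omega
    rw [h2, Nat.choose_symm (by omega)]
  have h4 : (4 : ℕ) ^ m = 2 ^ (2 * m) := by
    rw [pow_mul]; norm_num
  rw [hsym] at h1
  simp only [Nat.add_zero] at h1
  rw [hIcc, hsym, h4]
  omega

theorem stmt3 (m : ℕ) (hm : 1 ≤ m) :
    ∑ j ∈ Finset.Icc 1 m, |gam m j| * j < Real.sqrt (Real.pi * m) := by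
  have hcpos : 0 < ((2 * m).choose m : ℝ) := by
    exact_mod_cast Nat.choose_pos (by omega)
  set c : ℝ := ((2 * m).choose m : ℝ) with hc
  -- rewrite each term
  have hterm : ∀ j ∈ Finset.Icc 1 m,
      |gam m j| * j = 2 * ((2 * m).choose (m + j) : ℝ) / c := by
    intro j hj
    have hj1 : 1 ≤ j := (Finset.mem_Icc.mp hj).1
    have hjR : (0 : ℝ) < (j : ℝ) := by exact_mod_cast hj1
    unfold gam
    rw [abs_div, abs_mul, abs_mul, abs_pow, abs_neg, abs_one, one_pow, one_mul,
      abs_of_nonneg (by positivity : (0:ℝ) ≤ 2 / (j:ℝ)),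
      abs_of_nonneg (Nat.cast_nonneg _), abs_of_nonneg (Nat.cast_nonneg _)]
    rw [← hc]
    field_simp
  rw [Finset.sum_congr rfl hterm]
  -- compute the sum
  have hsum : ∑ j ∈ Finset.Icc 1 m, 2 * ((2 * m).choose (m + j) : ℝ) / c
      = (4 : ℝ) ^ m / c - 1 := by
    rw [← Finset.sum_div, ← Finset.mul_sum]
    have hA := sum_choose_upper m
    have hAR := congrArg (Nat.cast : ℕ → ℝ) hA
    push_cast at hAR
    rw [← hc] at hAR
    have : 2 * (∑ j ∈ Finset.Icc 1 m, ((2 * m).choose (m + j) : ℝ))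
        = (4 : ℝ) ^ m - c := by linarith
    rw [this]
    field_simp
  rw [hsum]
  set a : ℝ := (4 : ℝ) ^ m / c with ha
  have hapos : 0 < a := by positivity
  -- key: a ^ 2 = W m * (2m+1)
  have hfac : c * (Nat.factorial m : ℝ) ^ 2 = (Nat.factorial (2 * m) : ℝ) := by
    have := Nat.choose_mul_factorial_mul_factorial (show m ≤ 2 * m by omega)
    have h2 : 2 * m - m = m := by omega
    rw [h2] at this
    have := congrArg (Nat.cast : ℕ → ℝ) this
    push_cast at this
    rw [hc]
    nlinarith [this]
  have hfpos : (0 : ℝ) < (Nat.factorial m : ℝ) := by exact_mod_cast Nat.factorial_pos m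
  have hf2pos : (0 : ℝ) < (Nat.factorial (2 * m) : ℝ) := by exact_mod_cast Nat.factorial_pos (2 * m)
  have ha2 : a ^ 2 = Real.Wallis.W m * (2 * (m : ℝ) + 1) := by
    rw [Real.Wallis.W_eq_factorial_ratio]
    have h16 : (2 : ℝ) ^ (4 * m) = ((4 : ℝ) ^ m) ^ 2 := by
      rw [← pow_mul, show (4:ℝ) = 2^2 by norm_num, ← pow_mul]
      ring_nf
    rw [h16, ha]
    have hm1 : (0:ℝ) < 2 * (m:ℝ) + 1 := by positivity
    have hc2 : c ^ 2 * (Nat.factorial m : ℝ) ^ 4 = (Nat.factorial (2 * m) : ℝ) ^ 2 := by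
      nlinarith [hfac]
    field_simp
    linear_combination (-1 : ℝ) * hc2
  have hW := Real.Wallis.W_le m
  have hbound : a ^ 2 ≤ Real.pi * m + Real.pi / 2 := by
    rw [ha2]
    nlinarith [Real.pi_pos]
  -- conclude
  have hsq : Real.sqrt (Real.pi * m) ^ 2 = Real.pi * m := by
    rw [Real.sq_sqrt (by positivity)]
  have hsqrt1 : 1 ≤ Real.sqrt (Real.pi * m) := by
    rw [show (1:ℝ) = Real.sqrt 1 by simp]
    apply Real.sqrt_le_sqrt
    have : (1:ℝ) ≤ (m:ℝ) := by exact_mod_cast hm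
    nlinarith [Real.pi_gt_three]
  have hlt : a < Real.sqrt (Real.pi * m) + 1 := by
    have h1 : a ^ 2 < (Real.sqrt (Real.pi * m) + 1) ^ 2 := by
      have hpi4 : Real.pi < 4 := Real.pi_lt_d2.trans (by norm_num)
      nlinarith [hsq, hsqrt1]
    exact lt_of_pow_lt_pow_left₀ 2 (by positivity) h1
  linarith
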